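/- arXiv:2110.01998 — 2 statements merged into one kernel-verified Lean document; each statement's English description precedes it below -/
import Mathlib

section
/- For Δ > 1/2, the lacunary function g(t) = Σ_{k=1}^∞ k^{−2Δ}·exp(i·2^k·t) has modulus of continuity bounded below: there exists C₁ > 0 such that ω[g](δ) ≥ C₁·|ln δ|^{−2Δ} for all δ ∈ (0, 1/e). -/
open Complex Real

/-- The lacunary function `g(t) = Σ_{k=1}^∞ k^{-2Δ} exp(i 2^k t)`. -/
noncomputable def lacFun (Δ : ℝ) (t : ℝ) : ℂ :=
  ∑' k : ℕ, (((k : ℝ) + 1) ^ (-(2 * Δ)) : ℝ) *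
    Complex.exp (Complex.I * (2 : ℂ) ^ (k + 1) * (t : ℂ))

lemma summable_coeff {Δ : ℝ} (hΔ : 1 / 2 < Δ) :
    Summable (fun k : ℕ => ((k : ℝ) + 1) ^ (-(2 * Δ))) := by
  have h1 : Summable (fun n : ℕ => (n : ℝ) ^ (-(2 * Δ))) :=
    Real.summable_nat_rpow.2 (by linarith)
  have h2 := (summable_nat_add_iff 1).2 h1
  refine h2.congr fun k => ?_
  push_cast
  ring_nf

lemma exp_term_eq (k : ℕ) (t : ℝ) :
    Complex.exp (Complex.I * (2 : ℂ) ^ (k + 1) * (t : ℂ)) =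
      Complex.exp ((((2 : ℝ) ^ (k + 1) * t : ℝ) : ℂ) * Complex.I) := by
  congr 1
  push_cast
  ring

lemma norm_term (Δ : ℝ) (k : ℕ) (t : ℝ) :
    ‖(((((k : ℝ) + 1) ^ (-(2 * Δ)) : ℝ) : ℂ) *
      Complex.exp (Complex.I * (2 : ℂ) ^ (k + 1) * (t : ℂ)))‖ =
      ((k : ℝ) + 1) ^ (-(2 * Δ)) := by
  rw [exp_term_eq, norm_mul, Complex.norm_exp_ofReal_mul_I, mul_one, Complex.norm_real, Real.norm_eq_abs,
    _root_.abs_of_nonneg (Real.rpow_nonneg (by positivity) _)]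

lemma summable_term {Δ : ℝ} (hΔ : 1 / 2 < Δ) (t : ℝ) :
    Summable (fun k : ℕ => (((k : ℝ) + 1) ^ (-(2 * Δ)) : ℝ) *
      Complex.exp (Complex.I * (2 : ℂ) ^ (k + 1) * (t : ℂ))) := by
  apply Summable.of_norm
  exact (summable_coeff hΔ).congr fun k => (norm_term Δ k t).symm

lemma key_lower {Δ : ℝ} (hΔ : 1 / 2 < Δ) {m : ℕ} (hm : 1 ≤ m) :
    2 * (m : ℝ) ^ (-(2 * Δ)) ≤
      ‖lacFun Δ (π / 2 ^ m / 2) - lacFun Δ (-(π / 2 ^ m / 2))‖ := by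
  obtain ⟨n, rfl⟩ : ∃ n, m = n + 1 := ⟨m - 1, (Nat.succ_pred_eq_of_pos hm).symm⟩
  set h : ℝ := π / 2 ^ (n + 1) with hh
  have hhpos : 0 < h := by positivity
  set a : ℕ → ℝ := fun k => ((k : ℝ) + 1) ^ (-(2 * Δ)) with ha
  set r : ℕ → ℝ := fun k => 2 * a k * Real.sin (2 ^ k * h) with hr
  have ha_nonneg : ∀ k, 0 ≤ a k := fun k => Real.rpow_nonneg (by positivity) _
  have hsin_nonneg : ∀ k, 0 ≤ Real.sin ((2 : ℝ) ^ k * h) := by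
    intro k
    rcases le_or_gt (n + 1) k with hk | hk
    · have h2 : (2 : ℝ) ^ k = 2 ^ (k - (n + 1)) * 2 ^ (n + 1) := by
        rw [← pow_add, Nat.sub_add_cancel hk]
      have : (2 : ℝ) ^ k * h = ((2 ^ (k - (n + 1)) : ℕ) : ℝ) * π := by
        push_cast
        rw [hh, h2]
        field_simp
      rw [this, Real.sin_nat_mul_pi]
    · apply Real.sin_nonneg_of_nonneg_of_le_pi
      · positivity
      · have h2 : (2 : ℝ) ^ k ≤ 2 ^ (n + 1) := pow_le_pow_right₀ (by norm_num) hk.le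
        calc (2 : ℝ) ^ k * h ≤ 2 ^ (n + 1) * h := by gcongr
          _ = π := by rw [hh]; field_simp
  have hr_nonneg : ∀ k, 0 ≤ r k := fun k =>
    mul_nonneg (mul_nonneg (by norm_num) (ha_nonneg k)) (hsin_nonneg k)
  have hle : ∀ k, r k ≤ 2 * a k := by
    intro k
    show 2 * a k * Real.sin (2 ^ k * h) ≤ 2 * a k
    nlinarith [Real.sin_le_one ((2 : ℝ) ^ k * h), ha_nonneg k, hsin_nonneg k]
  have hr_summable : Summable r :=
    Summable.of_nonneg_of_le hr_nonneg hle ((summable_coeff hΔ).mul_left 2)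
  have hdiff : lacFun Δ (h / 2) - lacFun Δ (-(h / 2)) = ((∑' k, r k : ℝ) : ℂ) * Complex.I := by
    rw [lacFun, lacFun, ← Summable.tsum_sub (summable_term hΔ (h / 2)) (summable_term hΔ (-(h / 2))),
      Complex.ofReal_tsum, ← tsum_mul_right]
    refine tsum_congr fun k => ?_
    rw [exp_term_eq, exp_term_eq]
    have e1 : (2 : ℝ) ^ (k + 1) * (h / 2) = 2 ^ k * h := by ring
    have e2 : (2 : ℝ) ^ (k + 1) * (-(h / 2)) = -(2 ^ k * h) := by ring
    rw [e1, e2, Complex.exp_mul_I, Complex.exp_mul_I]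
    simp only [← Complex.ofReal_cos, ← Complex.ofReal_sin, Real.cos_neg, Real.sin_neg, hr]
    push_cast
    ring
  have harg : -(h / 2) = -(h / 2) := rfl
  rw [hdiff, norm_mul, Complex.norm_I, mul_one, Complex.norm_real, Real.norm_eq_abs,
    _root_.abs_of_nonneg (tsum_nonneg hr_nonneg)]
  have hterm : r n = 2 * ((n : ℝ) + 1) ^ (-(2 * Δ)) := by
    have : (2 : ℝ) ^ n * h = π / 2 := by rw [hh]; field_simp; ring
    rw [hr]
    simp only [this, Real.sin_pi_div_two, mul_one, ha]
  have := Summable.le_tsum hr_summable n fun j _ => hr_nonneg j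
  rw [hterm] at this
  push_cast
  linarith

/-- Modulus of continuity of a complex-valued function on ℝ. -/
noncomputable def modCont (f : ℝ → ℂ) (δ : ℝ) : ℝ :=
  sSup {y : ℝ | ∃ t h : ℝ, |h| ≤ δ ∧ y = ‖f (t + h) - f t‖}

lemma lacFun_norm_le {Δ : ℝ} (hΔ : 1 / 2 < Δ) (t : ℝ) :
    ‖lacFun Δ t‖ ≤ ∑' k : ℕ, ((k : ℝ) + 1) ^ (-(2 * Δ)) := by
  have := norm_tsum_le_tsum_norm (f := fun k : ℕ => (((k : ℝ) + 1) ^ (-(2 * Δ)) : ℝ) *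
      Complex.exp (Complex.I * (2 : ℂ) ^ (k + 1) * (t : ℂ)))
      (by refine (summable_coeff hΔ).congr fun k => (norm_term Δ k t).symm)
  calc ‖lacFun Δ t‖ ≤ _ := this
  _ = _ := tsum_congr fun k => norm_term Δ k t

lemma le_modCont {Δ : ℝ} (hΔ : 1 / 2 < Δ) {δ t h : ℝ} (hh : |h| ≤ δ) :
    ‖lacFun Δ (t + h) - lacFun Δ t‖ ≤ modCont (lacFun Δ) δ := by
  apply le_csSup
  · refine ⟨2 * ∑' k : ℕ, ((k : ℝ) + 1) ^ (-(2 * Δ)), ?_⟩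
    rintro y ⟨t', h', _, rfl⟩
    calc ‖lacFun Δ (t' + h') - lacFun Δ t'‖
        ≤ ‖lacFun Δ (t' + h')‖ + ‖lacFun Δ t'‖ :=
          norm_sub_le _ _
      _ ≤ _ := by have := lacFun_norm_le hΔ (t' + h'); have := lacFun_norm_le hΔ t'; linarith
  · exact ⟨t, h, hh, rfl⟩

/-- Example 2.1, lower bound:
`ω[g](δ) ≥ C₁ |ln δ|^{-2Δ}` for `0 < δ < 1/e`. -/
theorem lacFun_modCont_lower (Δ : ℝ) (hΔ : 1 / 2 < Δ) :
    ∃ C₁ : ℝ, 0 < C₁ ∧ ∀ δ : ℝ, δ ∈ Set.Ioo (0 : ℝ) (Real.exp (-1)) →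
      C₁ * |Real.log δ| ^ (-(2 * Δ)) ≤ modCont (lacFun Δ) δ := by
  refine ⟨2 * (5 : ℝ) ^ (-(2 * Δ)), by positivity, ?_⟩
  rintro δ ⟨hδ0, hδ1⟩
  have hlog : Real.log δ < -1 := by
    have := Real.log_lt_log hδ0 hδ1
    rwa [Real.log_exp] at this
  have habs : |Real.log δ| = -Real.log δ := abs_of_neg (by linarith)
  have h1l : (1 : ℝ) ≤ -Real.log δ := by linarith
  have hδ1' : δ < 1 := by
    have : Real.exp (-1) < Real.exp 0 := Real.exp_lt_exp.2 (by norm_num)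
    rw [Real.exp_zero] at this; linarith
  have hπδ : 1 < π / δ := (one_lt_div hδ0).2 (by linarith [Real.pi_gt_three])
  set m : ℕ := ⌈Real.logb 2 (π / δ)⌉₊ with hmdef
  have hlogb_pos : 0 < Real.logb 2 (π / δ) := Real.logb_pos (by norm_num) hπδ
  have hm1 : 1 ≤ m := Nat.ceil_pos.2 hlogb_pos
  have hmR : (1 : ℝ) ≤ (m : ℝ) := by exact_mod_cast hm1
  have hhle : π / 2 ^ m ≤ δ := by
    rw [div_le_iff₀ (by positivity)]
    have h2m : π / δ ≤ 2 ^ m := by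
      calc π / δ = 2 ^ Real.logb 2 (π / δ) :=
            (Real.rpow_logb (by norm_num) (by norm_num) (by positivity)).symm
        _ ≤ 2 ^ ((m : ℕ) : ℝ) := by
            apply Real.rpow_le_rpow_of_exponent_le (by norm_num)
            exact Nat.le_ceil _
        _ = 2 ^ m := by rw [Real.rpow_natCast]
    rw [div_le_iff₀ hδ0] at h2m
    linarith
  have hm5 : (m : ℝ) ≤ 5 * |Real.log δ| := by
    have hceil : (m : ℝ) < Real.logb 2 (π / δ) + 1 := Nat.ceil_lt_add_one hlogb_pos.le
    have hlogb : Real.logb 2 (π / δ) = (Real.log π - Real.log δ) / Real.log 2 := by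
      rw [Real.logb, Real.log_div (ne_of_gt Real.pi_pos) (ne_of_gt hδ0)]
    have hlogπ : Real.log π ≤ 2 * Real.log 2 := by
      calc Real.log π ≤ Real.log 4 := Real.log_le_log Real.pi_pos Real.pi_le_four
        _ = 2 * Real.log 2 := by
            rw [show (4 : ℝ) = 2 ^ 2 by norm_num, Real.log_pow]; push_cast; ring
    have hln2 : (0.6931471803 : ℝ) < Real.log 2 := Real.log_two_gt_d9
    have hln2' : Real.log 2 < 0.6931471808 := Real.log_two_lt_d9
    have hceil' : ((m : ℝ) - 1) * Real.log 2 ≤ Real.log π - Real.log δ := by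
      rw [← le_div_iff₀ (by linarith : (0 : ℝ) < Real.log 2)]
      rw [hlogb] at hceil
      linarith
    rw [habs]
    nlinarith [mul_le_mul_of_nonneg_right h1l (le_of_lt (show (0:ℝ) < Real.log 2 by linarith))]
  have hmono : (5 * |Real.log δ|) ^ (-(2 * Δ)) ≤ (m : ℝ) ^ (-(2 * Δ)) :=
    Real.rpow_le_rpow_of_nonpos (by linarith) hm5 (by linarith)
  have hsplit : (5 : ℝ) ^ (-(2 * Δ)) * |Real.log δ| ^ (-(2 * Δ)) =
      (5 * |Real.log δ|) ^ (-(2 * Δ)) :=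
    (Real.mul_rpow (by norm_num) (abs_nonneg _)).symm
  calc 2 * (5 : ℝ) ^ (-(2 * Δ)) * |Real.log δ| ^ (-(2 * Δ))
      = 2 * ((5 * |Real.log δ|) ^ (-(2 * Δ))) := by rw [← hsplit]; ring
    _ ≤ 2 * (m : ℝ) ^ (-(2 * Δ)) := by linarith
    _ ≤ ‖lacFun Δ (π / 2 ^ m / 2) - lacFun Δ (-(π / 2 ^ m / 2))‖ :=
        key_lower hΔ hm1
    _ ≤ modCont (lacFun Δ) δ := by
        have happ := le_modCont hΔ (δ := δ) (t := -(π / 2 ^ m / 2)) (h := π / 2 ^ m)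
          (by rw [abs_of_pos (by positivity)]; exact hhle)
        have e : -(π / 2 ^ m / 2) + π / 2 ^ m = π / 2 ^ m / 2 := by ring
        rwa [e] at happ
end

section
/- For Δ > 1, the lacunary function g(t) = Σ_{k=1}^∞ k^{−2Δ}·exp(i·2^k·t) has modulus of continuity bounded above: there exists C₂ < ∞ such that ω[g](δ) ≤ C₂·|ln δ|^{1−2Δ} for all δ ∈ (0, 1/e). -/
open Complex Real

lemma exp_mul_I_sub_one_abs_le (θ : ℝ) :
    ‖Complex.exp (θ * Complex.I) - 1‖ ≤ min 2 |θ| := by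
  apply le_min
  · calc ‖Complex.exp (θ * Complex.I) - 1‖
        ≤ ‖Complex.exp (θ * Complex.I)‖ + ‖(1:ℂ)‖ :=
          (norm_sub_le _ _)
    _ ≤ 2 := by rw [Complex.norm_exp_ofReal_mul_I]; norm_num
  · have h1 : Complex.exp (θ * Complex.I) - 1
        = ((Real.cos θ - 1 : ℝ) : ℂ) + ((Real.sin θ : ℝ) : ℂ) * Complex.I := by
      rw [Complex.exp_mul_I]
      push_cast [Complex.ofReal_cos, Complex.ofReal_sin]
      ring
    have h2 : (‖Complex.exp (θ * Complex.I) - 1‖)^2 = 2 - 2 * Real.cos θ := by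
      rw [h1, ← Complex.normSq_eq_norm_sq, Complex.normSq_add_mul_I]
      have := Real.sin_sq_add_cos_sq θ
      nlinarith
    have h3 : (‖Complex.exp (θ * Complex.I) - 1‖)^2 ≤ |θ|^2 := by
      rw [h2]
      have h4 := Real.one_sub_sq_div_two_le_cos (x := θ)
      have h5 : |θ|^2 = θ^2 := sq_abs θ
      nlinarith
    exact (pow_le_pow_iff_left₀ (norm_nonneg _) (abs_nonneg θ) two_ne_zero).mp h3

lemma telescope_step {q a : ℝ} (hq : 1 ≤ q) (ha : 1 ≤ a) :
    q * (a + 1) ^ (-(q + 1)) ≤ a ^ (-q) - (a + 1) ^ (-q) := by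
  have ha0 : (0:ℝ) < a := by linarith
  have hb0 : (0:ℝ) < a + 1 := by linarith
  have hA : (0:ℝ) < a ^ q := Real.rpow_pos_of_pos ha0 q
  have hB : (0:ℝ) < (a+1) ^ q := Real.rpow_pos_of_pos hb0 q
  have key : 1 + q * (1/a) ≤ (1 + 1/a) ^ q :=
    _root_.one_add_mul_self_le_rpow_one_add
      (le_trans (by norm_num) (by positivity : (0:ℝ) ≤ 1/a)) hq
  have hu : (1 + 1/a) ^ q = (a+1)^q / a^q := by
    rw [show (1 + 1/a) = (a+1)/a by field_simp, Real.div_rpow hb0.le ha0.le]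
  have hK : a ^ q * q ≤ ((a+1)^q - a^q) * a := by
    rw [hu] at key
    have h2 := mul_le_mul_of_nonneg_left key (le_of_lt (mul_pos ha0 hA))
    have h3 : a * a^q * (1 + q * (1/a)) = a * a^q + a^q * q * (a * (1/a)) := by ring
    have h4 : a * (1/a) = 1 := by field_simp
    have h5 : a * a^q * ((a+1)^q / a^q) = a * (a+1)^q := by field_simp
    rw [h3, h4, h5] at h2
    nlinarith
  have hrw : ∀ x : ℝ, 0 < x → x ^ (-q) = (x^q)⁻¹ := fun x hx => by
    rw [Real.rpow_neg hx.le]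
  have hrw2 : (a+1) ^ (-(q+1)) = ((a+1)^q * (a+1))⁻¹ := by
    rw [show -(q+1) = (-q) + (-1) by ring, Real.rpow_add hb0, Real.rpow_neg_one,
      Real.rpow_neg hb0.le, mul_inv]
  rw [hrw a ha0, hrw (a+1) hb0, hrw2, ← sub_nonneg]
  have expand : (a^q)⁻¹ - ((a+1)^q)⁻¹ - q * ((a+1)^q * (a+1))⁻¹
      = (((a+1)^q - a^q) * (a+1) - q * a^q) / (a^q * (a+1)^q * (a+1)) := by
    field_simp
  rw [expand]
  apply div_nonneg _ (by positivity)
  nlinarith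

lemma tail_bound {q : ℝ} (hq : 1 ≤ q) (K : ℕ) (hK : 1 ≤ K) :
    ∑' k : ℕ, (((K + k : ℕ) : ℝ) + 1) ^ (-(q+1)) ≤ (K : ℝ) ^ (-q) / q := by
  have hq0 : (0:ℝ) < q := by linarith
  apply Summable.tsum_le_of_sum_range_le
  · apply Summable.comp_injective (f := fun n : ℕ => ((n:ℝ)+1) ^ (-(q+1)))
      ?_ (fun a b h => by omega)
    · have : Summable (fun n : ℕ => ((n:ℝ)) ^ (-(q+1))) :=
        Real.summable_nat_rpow.mpr (by linarith)
      have h2 := (summable_nat_add_iff 1).mpr this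
      apply h2.congr
      intro n; push_cast; norm_num
  · intro n
    have step : ∀ k : ℕ, k ∈ Finset.range n →
        (((K + k : ℕ) : ℝ) + 1) ^ (-(q+1))
          ≤ ((fun m : ℕ => ((m:ℝ)) ^ (-q)) (K + k) - (fun m : ℕ => ((m:ℝ)) ^ (-q)) (K + k + 1)) / q := by
      intro k _
      have h1 : (1:ℝ) ≤ ((K + k : ℕ) : ℝ) := by
        have : 1 ≤ K + k := by omega
        exact_mod_cast this
      have := telescope_step hq h1
      rw [le_div_iff₀ hq0]
      simp only []
      push_cast
      push_cast at this
      linarith [this]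
    calc ∑ k ∈ Finset.range n, (((K + k : ℕ) : ℝ) + 1) ^ (-(q+1))
        ≤ ∑ k ∈ Finset.range n,
          (((fun m : ℕ => ((m:ℝ)) ^ (-q)) (K + k) - (fun m : ℕ => ((m:ℝ)) ^ (-q)) (K + k + 1)) / q) :=
          Finset.sum_le_sum step
      _ = (∑ k ∈ Finset.range n,
          ((fun k => (fun m : ℕ => ((m:ℝ)) ^ (-q)) (K + k)) k - (fun k => (fun m : ℕ => ((m:ℝ)) ^ (-q)) (K + k)) (k+1))) / q := by
          rw [← Finset.sum_div]
          norm_num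
          ring_nf
      _ ≤ (K : ℝ) ^ (-q) / q := by
          rw [Finset.sum_range_sub']
          gcongr
          simp only [add_zero]
          have : (0:ℝ) ≤ ((K + n : ℕ):ℝ) ^ (-q) := Real.rpow_nonneg (by positivity) _
          linarith

lemma SB_summable {P : ℝ} (hP : 0 ≤ P) :
    Summable (fun j : ℕ => (2*((j:ℝ)+1))^P * ((2:ℝ)⁻¹)^j) := by
  set n := ⌈P⌉₊ with hn
  have hgeom : Summable (fun m : ℕ => (m:ℝ)^(n+1) * ((2:ℝ)⁻¹)^m) :=
    summable_pow_mul_geometric_of_norm_lt_one (R := ℝ) (n+1)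
      (r := (2:ℝ)⁻¹)
      (by rw [Real.norm_eq_abs, _root_.abs_of_nonneg (by norm_num : (0:ℝ) ≤ 2⁻¹)]; norm_num)
  have hshift : Summable (fun j : ℕ => ((j+1:ℕ):ℝ)^(n+1) * ((2:ℝ)⁻¹)^(j+1)) :=
    hgeom.comp_injective (add_left_injective 1)
  have hshift2 : Summable (fun j : ℕ => (2:ℝ)^(n+2) * (((j+1:ℕ):ℝ)^(n+1) * ((2:ℝ)⁻¹)^(j+1))) :=
    hshift.mul_left _
  apply Summable.of_nonneg_of_le (fun j => by positivity) _ hshift2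
  intro j
  have h1 : (2*((j:ℝ)+1))^P ≤ (2*((j:ℝ)+1))^(n+1 : ℕ) := by
    rw [← Real.rpow_natCast (2*((j:ℝ)+1)) (n+1)]
    apply Real.rpow_le_rpow_of_exponent_le (by push_cast; linarith [Nat.cast_nonneg (α := ℝ) j])
    push_cast
    calc P ≤ (n:ℝ) := Nat.le_ceil P
    _ ≤ (n:ℝ) + 1 := by linarith
  calc (2*((j:ℝ)+1))^P * ((2:ℝ)⁻¹)^j
      ≤ (2*((j:ℝ)+1))^(n+1:ℕ) * ((2:ℝ)⁻¹)^j :=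
        mul_le_mul_of_nonneg_right h1 (by positivity)
    _ = (2:ℝ)^(n+2) * (((j+1:ℕ):ℝ)^(n+1) * ((2:ℝ)⁻¹)^(j+1)) := by
        rw [mul_pow, pow_succ ((2:ℝ)⁻¹) j, pow_succ (2:ℝ) (n+1)]
        push_cast
        field_simp

lemma head_sum_le {P : ℝ} (hP : 0 ≤ P) (K : ℕ) (hK : 1 ≤ K) :
    ∑ k ∈ Finset.range K, ((k:ℝ)+1)^(-P) * (2:ℝ)^(k+1)
      ≤ (∑' j : ℕ, (2*((j:ℝ)+1))^P * ((2:ℝ)⁻¹)^j) * ((2:ℝ)^K * (K:ℝ)^(-P)) := by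
  rw [← Finset.sum_range_reflect]
  have hKpos : (0:ℝ) < (K:ℝ) := by exact_mod_cast hK
  have hterm : ∀ j ∈ Finset.range K,
      ((((K - 1 - j : ℕ)):ℝ)+1)^(-P) * (2:ℝ)^((K - 1 - j)+1)
        ≤ ((2*((j:ℝ)+1))^P * ((2:ℝ)⁻¹)^j) * ((2:ℝ)^K * (K:ℝ)^(-P)) := by
    intro j hj
    rw [Finset.mem_range] at hj
    have e1 : (((K - 1 - j : ℕ)):ℝ) + 1 = ((K - j : ℕ) : ℝ) := by
      have : (K - 1 - j) + 1 = K - j := by omega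
      rw [← this]; push_cast; ring
    have e2 : (K - 1 - j) + 1 = K - j := by omega
    rw [e1, e2]
    have hKj : (0:ℝ) < ((K - j : ℕ):ℝ) := by
      have : 1 ≤ K - j := by omega
      exact_mod_cast Nat.lt_of_lt_of_le Nat.zero_lt_one this
    have hpow : (2:ℝ)^(K - j) = (2:ℝ)^K * ((2:ℝ)⁻¹)^j := by
      rw [inv_pow, pow_sub₀ (2:ℝ) (by norm_num) (by omega)]
    have hnat : (K:ℝ) ≤ 2*((j:ℝ)+1) * ((K - j : ℕ):ℝ) := by
      have : K ≤ 2 * (j+1) * (K - j) := by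
        rcases Nat.lt_or_ge j ((K-1)/2) with h | h <;> nlinarith [Nat.sub_add_cancel (le_of_lt hj)]
      calc (K:ℝ) ≤ ((2 * (j+1) * (K - j) : ℕ) : ℝ) := by exact_mod_cast this
      _ = 2*((j:ℝ)+1) * ((K - j : ℕ):ℝ) := by push_cast; ring
    have hrpow : (K:ℝ)^P ≤ (2*((j:ℝ)+1))^P * ((K - j : ℕ):ℝ)^P := by
      rw [← Real.mul_rpow (by positivity) hKj.le]
      exact Real.rpow_le_rpow hKpos.le hnat hP
    have hc : (0:ℝ) < (2*((j:ℝ)+1))^P := Real.rpow_pos_of_pos (by positivity) P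
    have hx : (0:ℝ) < ((K - j : ℕ):ℝ)^P := Real.rpow_pos_of_pos hKj P
    have hy : (0:ℝ) < (K:ℝ)^P := Real.rpow_pos_of_pos hKpos P
    have hmain : ((K - j : ℕ):ℝ)^(-P) ≤ (2*((j:ℝ)+1))^P * (K:ℝ)^(-P) := by
      rw [Real.rpow_neg hKj.le, Real.rpow_neg hKpos.le]
      simp only [inv_eq_one_div]
      rw [mul_one_div, div_le_div_iff₀ hx hy]
      nlinarith
    calc ((K - j : ℕ):ℝ)^(-P) * (2:ℝ)^(K - j)
        ≤ ((2*((j:ℝ)+1))^P * (K:ℝ)^(-P)) * (2:ℝ)^(K - j) :=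
          mul_le_mul_of_nonneg_right hmain (by positivity)
      _ = ((2*((j:ℝ)+1))^P * ((2:ℝ)⁻¹)^j) * ((2:ℝ)^K * (K:ℝ)^(-P)) := by
          rw [hpow]; ring
  calc ∑ j ∈ Finset.range K, ((((K - 1 - j : ℕ)):ℝ)+1)^(-P) * (2:ℝ)^((K - 1 - j)+1)
      ≤ ∑ j ∈ Finset.range K, ((2*((j:ℝ)+1))^P * ((2:ℝ)⁻¹)^j) * ((2:ℝ)^K * (K:ℝ)^(-P)) :=
        Finset.sum_le_sum hterm
    _ = (∑ j ∈ Finset.range K, (2*((j:ℝ)+1))^P * ((2:ℝ)⁻¹)^j) * ((2:ℝ)^K * (K:ℝ)^(-P)) := by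
        rw [← Finset.sum_mul]
    _ ≤ (∑' j : ℕ, (2*((j:ℝ)+1))^P * ((2:ℝ)⁻¹)^j) * ((2:ℝ)^K * (K:ℝ)^(-P)) := by
        apply mul_le_mul_of_nonneg_right _ (by positivity)
        exact Summable.sum_le_tsum _ (fun i _ => by positivity) (SB_summable hP)

lemma a_summable {Δ : ℝ} (hΔ : 1 < Δ) :
    Summable (fun k : ℕ => ((k:ℝ)+1)^(-(2*Δ))) := by
  have h0 : Summable (fun n : ℕ => ((n:ℝ)) ^ (-(2*Δ))) :=
    Real.summable_nat_rpow.mpr (by linarith)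
  have h2 := (summable_nat_add_iff 1).mpr h0
  apply h2.congr
  intro n; push_cast; norm_num

lemma point_bound {Δ : ℝ} (hΔ : 1 < Δ) {δ t h : ℝ} (hδ : 0 < δ) (hh : |h| ≤ δ) :
    ‖lacFun Δ (t+h) - lacFun Δ t‖
      ≤ ∑' k : ℕ, ((k:ℝ)+1)^(-(2*Δ)) * min 2 ((2:ℝ)^(k+1)*δ) := by
  set a : ℕ → ℝ := fun k => ((k:ℝ)+1)^(-(2*Δ)) with ha
  have ha_nonneg : ∀ k, 0 ≤ a k := fun k => Real.rpow_nonneg (by positivity) _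
  have Sa := a_summable hΔ
  have cast_arg : ∀ (k:ℕ) (x:ℝ),
      Complex.I * (2:ℂ)^(k+1) * (x:ℂ) = (((2:ℝ)^(k+1)*x : ℝ):ℂ) * Complex.I := by
    intro k x; push_cast; ring
  have hnorm : ∀ (x : ℝ) (k : ℕ),
      ‖((a k : ℝ):ℂ) * Complex.exp (Complex.I * (2:ℂ)^(k+1) * (x:ℂ))‖ = a k := by
    intro x k
    rw [norm_mul, cast_arg, Complex.norm_real, Real.norm_eq_abs,
      Complex.norm_exp_ofReal_mul_I, mul_one,
      _root_.abs_of_nonneg (ha_nonneg k)]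
  have SE : ∀ x : ℝ, Summable (fun k : ℕ =>
      ((a k : ℝ):ℂ) * Complex.exp (Complex.I * (2:ℂ)^(k+1) * (x:ℂ))) := by
    intro x
    apply Summable.of_norm
    simpa only [hnorm] using Sa
  have hdiffeq : lacFun Δ (t+h) - lacFun Δ t
      = ∑' k : ℕ, (((a k : ℝ):ℂ) * Complex.exp (Complex.I * (2:ℂ)^(k+1) * ((t+h:ℝ):ℂ))
          - ((a k : ℝ):ℂ) * Complex.exp (Complex.I * (2:ℂ)^(k+1) * ((t:ℝ):ℂ))) := by
    rw [lacFun, lacFun, ← Summable.tsum_sub (SE (t+h)) (SE t)]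
  have termbound : ∀ k : ℕ,
      ‖((a k : ℝ):ℂ) * Complex.exp (Complex.I * (2:ℂ)^(k+1) * ((t+h:ℝ):ℂ))
          - ((a k : ℝ):ℂ) * Complex.exp (Complex.I * (2:ℂ)^(k+1) * ((t:ℝ):ℂ))‖
        ≤ a k * min 2 ((2:ℝ)^(k+1)*δ) := by
    intro k
    have split : Complex.I * (2:ℂ)^(k+1) * ((t+h:ℝ):ℂ)
        = (((2:ℝ)^(k+1)*t : ℝ):ℂ) * Complex.I + (((2:ℝ)^(k+1)*h : ℝ):ℂ) * Complex.I := by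
      push_cast; ring
    have e1 : ((a k : ℝ):ℂ) * Complex.exp (Complex.I * (2:ℂ)^(k+1) * ((t+h:ℝ):ℂ))
          - ((a k : ℝ):ℂ) * Complex.exp (Complex.I * (2:ℂ)^(k+1) * ((t:ℝ):ℂ))
        = ((a k : ℝ):ℂ) * Complex.exp ((((2:ℝ)^(k+1)*t : ℝ):ℂ) * Complex.I)
            * (Complex.exp ((((2:ℝ)^(k+1)*h : ℝ):ℂ) * Complex.I) - 1) := by
      rw [split, Complex.exp_add, cast_arg]
      ring
    rw [e1, norm_mul, norm_mul, Complex.norm_real, Real.norm_eq_abs,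
      Complex.norm_exp_ofReal_mul_I, mul_one,
      _root_.abs_of_nonneg (ha_nonneg k)]
    apply mul_le_mul_of_nonneg_left _ (ha_nonneg k)
    calc ‖Complex.exp ((((2:ℝ)^(k+1)*h : ℝ):ℂ) * Complex.I) - 1‖
        ≤ min 2 |(2:ℝ)^(k+1)*h| := exp_mul_I_sub_one_abs_le _
      _ ≤ min 2 ((2:ℝ)^(k+1)*δ) := by
          apply min_le_min le_rfl
          rw [abs_mul, _root_.abs_of_nonneg (by positivity : (0:ℝ) ≤ (2:ℝ)^(k+1))]
          exact mul_le_mul_of_nonneg_left hh (by positivity)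
  have Sm : Summable (fun k : ℕ => a k * min 2 ((2:ℝ)^(k+1)*δ)) := by
    apply Summable.of_nonneg_of_le
      (fun k => mul_nonneg (ha_nonneg k) (le_min (by norm_num) (by positivity)))
      (fun k => ?_) (Sa.mul_left 2)
    calc a k * min 2 ((2:ℝ)^(k+1)*δ) ≤ a k * 2 :=
          mul_le_mul_of_nonneg_left (min_le_left _ _) (ha_nonneg k)
      _ = 2 * a k := by ring
  have Snorm : Summable (fun k : ℕ =>
      ‖((a k : ℝ):ℂ) * Complex.exp (Complex.I * (2:ℂ)^(k+1) * ((t+h:ℝ):ℂ))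
          - ((a k : ℝ):ℂ) * Complex.exp (Complex.I * (2:ℂ)^(k+1) * ((t:ℝ):ℂ))‖) := by
    apply Summable.of_nonneg_of_le (fun k => norm_nonneg _) termbound Sm
  rw [hdiffeq]
  calc ‖∑' k : ℕ, (((a k : ℝ):ℂ) * Complex.exp (Complex.I * (2:ℂ)^(k+1) * ((t+h:ℝ):ℂ))
          - ((a k : ℝ):ℂ) * Complex.exp (Complex.I * (2:ℂ)^(k+1) * ((t:ℝ):ℂ)))‖
      ≤ ∑' k : ℕ, ‖((a k : ℝ):ℂ) * Complex.exp (Complex.I * (2:ℂ)^(k+1) * ((t+h:ℝ):ℂ))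
          - ((a k : ℝ):ℂ) * Complex.exp (Complex.I * (2:ℂ)^(k+1) * ((t:ℝ):ℂ))‖ :=
        norm_tsum_le_tsum_norm Snorm
    _ ≤ ∑' k : ℕ, a k * min 2 ((2:ℝ)^(k+1)*δ) := Summable.tsum_le_tsum termbound Snorm Sm

/-- Example 2.1, upper bound:
`ω[g](δ) ≤ C₂ |ln δ|^{1-2Δ}` for `0 < δ < 1/e`. -/
theorem lacFun_modCont_upper (Δ : ℝ) (hΔ : 1 < Δ) :
    ∃ C₂ : ℝ, 0 < C₂ ∧ ∀ δ : ℝ, δ ∈ Set.Ioo (0 : ℝ) (Real.exp (-1)) →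
      modCont (lacFun Δ) δ ≤ C₂ * |Real.log δ| ^ (1 - 2 * Δ) := by
  have hq : (1:ℝ) ≤ 2*Δ - 1 := by linarith
  have hq0 : (0:ℝ) < 2*Δ - 1 := by linarith
  set B := ∑' j : ℕ, (2*((j:ℝ)+1))^(2*Δ) * ((2:ℝ)⁻¹)^j with hB
  have hB0 : 0 ≤ B := tsum_nonneg (fun j => by positivity)
  have hlog2pos : 0 < Real.log 2 := Real.log_pos (by norm_num)
  have hlog2lt : Real.log 2 < 1 := by
    have := Real.log_two_lt_d9; norm_num at this ⊢; linarith
  set c : ℝ := 1/Real.log 2 - 1 with hc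
  have hcpos : 0 < c := by
    rw [hc]
    have : 1 < 1/Real.log 2 := (one_lt_one_div hlog2pos hlog2lt)
    linarith
  have hcexp : (0:ℝ) < c^(1-2*Δ) := Real.rpow_pos_of_pos hcpos _
  refine ⟨(B + 2/(2*Δ-1)) * c^(1-2*Δ), by positivity, ?_⟩
  rintro δ ⟨hδ0, hδ1⟩
  set L := |Real.log δ| with hL
  have hlogδ : Real.log δ < -1 := by
    have := Real.log_lt_log hδ0 hδ1
    rwa [Real.log_exp] at this
  have hLeq : L = -Real.log δ := abs_of_neg (by linarith)
  have hL1 : 1 ≤ L := by rw [hLeq]; linarith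
  have hL0 : 0 < L := by linarith
  set K := ⌊L / Real.log 2⌋₊ with hK
  have hK1 : 1 ≤ K := by
    apply Nat.le_floor
    rw [Nat.cast_one, le_div_iff₀ hlog2pos]
    nlinarith
  have hKpos : (0:ℝ) < (K:ℝ) := by exact_mod_cast hK1
  have hKR1 : (1:ℝ) ≤ (K:ℝ) := by exact_mod_cast hK1
  have hKle : (K:ℝ) ≤ L / Real.log 2 := Nat.floor_le (by positivity)
  have h2K : δ * (2:ℝ)^K ≤ 1 := by
    have hexp : (2:ℝ)^K = Real.exp ((K:ℝ) * Real.log 2) := by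
      rw [Real.exp_nat_mul, Real.exp_log (by norm_num : (0:ℝ) < 2)]
    have harg : (K:ℝ) * Real.log 2 ≤ L := (le_div_iff₀ hlog2pos).mp hKle
    have h2 : (2:ℝ)^K ≤ δ⁻¹ := by
      rw [hexp, show δ⁻¹ = Real.exp L by
        rw [hLeq, Real.exp_neg, Real.exp_log hδ0]]
      exact Real.exp_le_exp.mpr harg
    calc δ * (2:ℝ)^K ≤ δ * δ⁻¹ := mul_le_mul_of_nonneg_left h2 hδ0.le
      _ = 1 := mul_inv_cancel₀ hδ0.ne'
  have hcLK : c * L ≤ (K:ℝ) := by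
    have hflo : L / Real.log 2 - 1 ≤ (K:ℝ) := by
      have := Nat.lt_floor_add_one (L / Real.log 2)
      rw [← hK] at this
      linarith
    have he : c * L = L / Real.log 2 - L := by
      rw [hc]; field_simp
    rw [he]
    linarith
  -- the majorant series facts
  set a : ℕ → ℝ := fun k => ((k:ℝ)+1)^(-(2*Δ)) with ha
  have ha_nonneg : ∀ k, 0 ≤ a k := fun k => Real.rpow_nonneg (by positivity) _
  have Sa := a_summable hΔ
  have Sm : Summable (fun k : ℕ => a k * min 2 ((2:ℝ)^(k+1)*δ)) := by
    apply Summable.of_nonneg_of_le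
      (fun k => mul_nonneg (ha_nonneg k) (le_min (by norm_num) (by positivity)))
      (fun k => ?_) (Sa.mul_left 2)
    calc a k * min 2 ((2:ℝ)^(k+1)*δ) ≤ a k * 2 :=
          mul_le_mul_of_nonneg_left (min_le_left _ _) (ha_nonneg k)
      _ = 2 * a k := by ring
  have main : ∑' k : ℕ, a k * min 2 ((2:ℝ)^(k+1)*δ)
      ≤ (B + 2/(2*Δ-1)) * (K:ℝ)^(1-2*Δ) := by
    rw [← Summable.sum_add_tsum_nat_add K Sm]
    have head : ∑ k ∈ Finset.range K, a k * min 2 ((2:ℝ)^(k+1)*δ)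
        ≤ B * (K:ℝ)^(1-2*Δ) := by
      have h1 : ∑ k ∈ Finset.range K, a k * min 2 ((2:ℝ)^(k+1)*δ)
          ≤ ∑ k ∈ Finset.range K, (a k * (2:ℝ)^(k+1)) * δ := by
        apply Finset.sum_le_sum
        intro k _
        rw [mul_assoc]
        exact mul_le_mul_of_nonneg_left
          ((min_le_right _ _)) (ha_nonneg k)
      have h2 : ∑ k ∈ Finset.range K, (a k * (2:ℝ)^(k+1)) * δ
          = (∑ k ∈ Finset.range K, a k * (2:ℝ)^(k+1)) * δ := by
        rw [← Finset.sum_mul]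
      have h3 := head_sum_le (P := 2*Δ) (by linarith) K hK1
      have h4 : (∑ k ∈ Finset.range K, a k * (2:ℝ)^(k+1)) * δ
          ≤ (B * ((2:ℝ)^K * (K:ℝ)^(-(2*Δ)))) * δ :=
        mul_le_mul_of_nonneg_right h3 hδ0.le
      have h5 : (B * ((2:ℝ)^K * (K:ℝ)^(-(2*Δ)))) * δ
          = (B * (K:ℝ)^(-(2*Δ))) * (δ * (2:ℝ)^K) := by ring
      have h6 : (B * (K:ℝ)^(-(2*Δ)))*(δ * (2:ℝ)^K) ≤ (B * (K:ℝ)^(-(2*Δ))) * 1 :=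
        mul_le_mul_of_nonneg_left h2K (by positivity)
      have h7 : (K:ℝ)^(-(2*Δ)) ≤ (K:ℝ)^(1-2*Δ) :=
        Real.rpow_le_rpow_of_exponent_le hKR1 (by linarith)
      calc ∑ k ∈ Finset.range K, a k * min 2 ((2:ℝ)^(k+1)*δ)
          ≤ (∑ k ∈ Finset.range K, a k * (2:ℝ)^(k+1)) * δ := by
            rw [← h2]; exact h1
        _ ≤ (B * ((2:ℝ)^K * (K:ℝ)^(-(2*Δ)))) * δ := h4
        _ ≤ (B * (K:ℝ)^(-(2*Δ))) * 1 := by rw [h5]; exact h6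
        _ = B * (K:ℝ)^(-(2*Δ)) := by ring
        _ ≤ B * (K:ℝ)^(1-2*Δ) := mul_le_mul_of_nonneg_left h7 hB0
    have tail : ∑' k : ℕ, a (k + K) * min 2 ((2:ℝ)^((k+K)+1)*δ)
        ≤ (2/(2*Δ-1)) * (K:ℝ)^(1-2*Δ) := by
      have Sm' : Summable (fun k : ℕ => a (k+K) * min 2 ((2:ℝ)^((k+K)+1)*δ)) :=
        (summable_nat_add_iff K).mpr Sm
      have Sa' : Summable (fun k : ℕ => 2 * a (k+K)) :=
        (((summable_nat_add_iff K).mpr Sa).mul_left 2)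
      have hterm : ∀ k : ℕ, a (k + K) * min 2 ((2:ℝ)^((k+K)+1)*δ) ≤ 2 * a (k+K) := by
        intro k
        calc a (k + K) * min 2 ((2:ℝ)^((k+K)+1)*δ) ≤ a (k+K) * 2 :=
              mul_le_mul_of_nonneg_left (min_le_left _ _) (ha_nonneg _)
          _ = 2 * a (k+K) := by ring
      have h8 : ∑' k : ℕ, a (k + K) * min 2 ((2:ℝ)^((k+K)+1)*δ)
          ≤ ∑' k : ℕ, 2 * a (k+K) := Summable.tsum_le_tsum hterm Sm' Sa'
      have h9 : ∑' k : ℕ, 2 * a (k+K) = 2 * ∑' k : ℕ, a (k+K) := tsum_mul_left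
      have h10 : ∑' k : ℕ, a (k+K) ≤ (K:ℝ)^(-(2*Δ-1)) / (2*Δ-1) := by
        have := tail_bound hq K hK1
        have heq : ∑' k : ℕ, a (k+K) = ∑' k : ℕ, (((K + k : ℕ) : ℝ) + 1) ^ (-((2*Δ-1)+1)) := by
          apply tsum_congr
          intro k
          rw [ha]
          simp only []
          push_cast
          rw [show K + (k:ℝ) = (k:ℝ) + K by ring, show -((2*Δ-1)+1) = -(2*Δ) by ring]
        rw [heq]
        exact this
      calc ∑' k : ℕ, a (k + K) * min 2 ((2:ℝ)^((k+K)+1)*δ)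
          ≤ 2 * ∑' k : ℕ, a (k+K) := by rw [← h9]; exact h8
        _ ≤ 2 * ((K:ℝ)^(-(2*Δ-1)) / (2*Δ-1)) := by
            apply mul_le_mul_of_nonneg_left h10 (by norm_num)
        _ = (2/(2*Δ-1)) * (K:ℝ)^(1-2*Δ) := by
            rw [show -(2*Δ-1) = 1-2*Δ by ring]
            ring
    calc (∑ k ∈ Finset.range K, a k * min 2 ((2:ℝ)^(k+1)*δ))
          + ∑' k : ℕ, a (k + K) * min 2 ((2:ℝ)^((k+K)+1)*δ)
        ≤ B * (K:ℝ)^(1-2*Δ) + (2/(2*Δ-1)) * (K:ℝ)^(1-2*Δ) := add_le_add head tail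
      _ = (B + 2/(2*Δ-1)) * (K:ℝ)^(1-2*Δ) := by ring
  have hKL : (K:ℝ)^(1-2*Δ) ≤ c^(1-2*Δ) * L^(1-2*Δ) := by
    have h1 : (K:ℝ)^(1-2*Δ) ≤ (c*L)^(1-2*Δ) :=
      Real.rpow_le_rpow_of_nonpos (by positivity) hcLK (by linarith)
    rwa [Real.mul_rpow hcpos.le hL0.le] at h1
  apply Real.sSup_le
  · rintro y ⟨t, h, hh, rfl⟩
    calc ‖lacFun Δ (t + h) - lacFun Δ t‖
        ≤ ∑' k : ℕ, a k * min 2 ((2:ℝ)^(k+1)*δ) := point_bound hΔ hδ0 hh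
      _ ≤ (B + 2/(2*Δ-1)) * (K:ℝ)^(1-2*Δ) := main
      _ ≤ (B + 2/(2*Δ-1)) * (c^(1-2*Δ) * L^(1-2*Δ)) := by
          apply mul_le_mul_of_nonneg_left hKL (by positivity)
      _ = ((B + 2/(2*Δ-1)) * c^(1-2*Δ)) * L^(1-2*Δ) := by ring
  · positivity
end
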